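/- For every set function ξ on N and every subset S ⊆ N, the Möbius transform is recovered from the Fourier transform by m^ξ(S) = (−2)^{|S|} Σ_{T : S ⊆ T ⊆ N} ξ̂(T). -/

import Mathlib

open MeasureTheory Finset

/-- The uniform probability measure on the unit cube `[0,1]^n`. -/
noncomputable def unifCube (n : ℕ) : Measure (Fin n → ℝ) :=
  Measure.pi fun _ => volume.restrict (Set.Icc 0 1)

/-- The Möbius transform of a set function. -/
noncomputable def mobius {n : ℕ} (ξ : Finset (Fin n) → ℝ) (S : Finset (Fin n)) : ℝ :=
  ∑ T ∈ S.powerset, (-1 : ℝ) ^ (S \ T).card * ξ T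

/-- The Fourier transform of a set function. -/
noncomputable def fourierT {n : ℕ} (ξ : Finset (Fin n) → ℝ) (S : Finset (Fin n)) : ℝ :=
  (1 / 2 ^ n : ℝ) * ∑ T : Finset (Fin n), (-1 : ℝ) ^ (S ∩ T).card * ξ T

/-- The Banzhaf interaction transform of a set function. -/
noncomputable def banzhaf {n : ℕ} (ξ : Finset (Fin n) → ℝ) (S : Finset (Fin n)) : ℝ :=
  (1 / 2 : ℝ) ^ (n - S.card) * ∑ K : Finset (Fin n), (-1 : ℝ) ^ (S \ K).card * ξ K

/-- The multilinear (Owen) extension associated with coefficients `m`. -/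
noncomputable def fOw {n : ℕ} (m : Finset (Fin n) → ℝ) (x : Fin n → ℝ) : ℝ :=
  ∑ T : Finset (Fin n), m T * ∏ i ∈ T, x i

/-- A capacity: vanishes on the empty set and is monotone. -/
def Capacity {n : ℕ} (μ : Finset (Fin n) → ℝ) : Prop :=
  μ ∅ = 0 ∧ ∀ S T : Finset (Fin n), S ⊆ T → μ S ≤ μ T

/-- The ANOVA component of `f` associated with the subset `S`. -/
noncomputable def anova {n : ℕ} (f : (Fin n → ℝ) → ℝ) (S : Finset (Fin n))
    (z : Fin n → ℝ) : ℝ :=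
  ∑ T ∈ S.powerset, (-1 : ℝ) ^ (S \ T).card *
    ∫ y, f (fun i => if i ∈ T then z i else y i) ∂unifCube n

/-- The Choquet integral (Lovász extension) of a 2-additive capacity with
Möbius transform `m`. -/
noncomputable def fLo {n : ℕ} (m : Finset (Fin n) → ℝ) (z : Fin n → ℝ) : ℝ :=
  ∑ i, m {i} * z i +
    ∑ i, ∑ j ∈ Finset.univ.filter (fun j => i < j), m {i, j} * min (z i) (z j)

lemma aux_sum_powerset {n : ℕ} (A K : Finset (Fin n)) :
    ∑ U ∈ A.powerset, (-1:ℝ)^(U ∩ K).card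
      = if A ∩ K = ∅ then (2:ℝ)^A.card else 0 := by
  have step : ∀ U ∈ A.powerset, (-1:ℝ)^(U ∩ K).card
      = (∏ i ∈ U, (if i ∈ K then (-1:ℝ) else 1)) * ∏ i ∈ A \ U, (1:ℝ) := by
    intro U _
    rw [Finset.prod_const_one, mul_one, ← Finset.prod_inter_mul_prod_diff U K]
    have e1 : ∏ i ∈ U ∩ K, (if i ∈ K then (-1:ℝ) else 1) = (-1:ℝ)^(U ∩ K).card := by
      rw [Finset.prod_congr rfl (g := fun _ => (-1:ℝ))
        (fun i hi => if_pos (Finset.mem_inter.mp hi).2), Finset.prod_const]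
    have e2 : ∏ i ∈ U \ K, (if i ∈ K then (-1:ℝ) else 1) = 1 := by
      rw [Finset.prod_congr rfl (g := fun _ => (1:ℝ))
        (fun i hi => if_neg (Finset.mem_sdiff.mp hi).2), Finset.prod_const_one]
    rw [e1, e2, mul_one]
  rw [Finset.sum_congr rfl step, ← Finset.prod_add]
  by_cases h : A ∩ K = ∅
  · rw [if_pos h]
    have h2 : ∀ i ∈ A, ((if i ∈ K then (-1:ℝ) else 1) + 1) = 2 := by
      intro i hi
      have : i ∉ K := fun hk => (Finset.notMem_empty i) (h ▸ Finset.mem_inter.mpr ⟨hi, hk⟩)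
      rw [if_neg this]; norm_num
    rw [Finset.prod_congr rfl h2, Finset.prod_const]
  · rw [if_neg h]
    obtain ⟨i, hi⟩ := Finset.nonempty_iff_ne_empty.mpr h
    have hiA := (Finset.mem_inter.mp hi).1
    have hiK := (Finset.mem_inter.mp hi).2
    exact Finset.prod_eq_zero hiA (by rw [if_pos hiK]; norm_num)

lemma aux_key {n : ℕ} (S K : Finset (Fin n)) :
    ∑ T ∈ Finset.univ.filter (fun T => S ⊆ T), (-1:ℝ)^(T ∩ K).card
      = if K ⊆ S then (-1:ℝ)^K.card * 2^(n - S.card) else 0 := by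
  have reindex : ∑ T ∈ Finset.univ.filter (fun T => S ⊆ T), (-1:ℝ)^(T ∩ K).card
      = ∑ U ∈ Sᶜ.powerset, (-1:ℝ)^(S ∩ K).card * (-1:ℝ)^(U ∩ K).card := by
    refine Finset.sum_nbij' (fun T => T \ S) (fun U => S ∪ U) ?_ ?_ ?_ ?_ ?_
    · intro T hT
      simp only [Finset.mem_filter] at hT
      simp only [Finset.mem_powerset]
      intro x hx
      simp only [Finset.mem_sdiff] at hx
      simp [hx.2]
    · intro U hU; simp
    · intro T hT
      simp only [Finset.mem_filter] at hT
      exact Finset.union_sdiff_of_subset hT.2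
    · intro U hU
      simp only [Finset.mem_powerset] at hU
      show (S ∪ U) \ S = U
      rw [Finset.union_sdiff_cancel_left]
      rw [Finset.disjoint_left]
      intro a haS haU
      have := hU haU
      simp at this; exact this haS
    · intro T hT
      simp only [Finset.mem_filter] at hT
      rw [← pow_add, ← Finset.card_union_of_disjoint, ← Finset.union_inter_distrib_right,
        Finset.union_sdiff_of_subset hT.2]
      exact Finset.disjoint_of_subset_left Finset.inter_subset_left
        (Finset.disjoint_of_subset_right Finset.inter_subset_left Finset.sdiff_disjoint.symm)
  rw [reindex, ← Finset.mul_sum, aux_sum_powerset]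
  have hc : Sᶜ ∩ K = ∅ ↔ K ⊆ S := by
    constructor
    · intro h x hxK
      by_contra hxS
      exact Finset.notMem_empty x (h ▸ Finset.mem_inter.mpr ⟨Finset.mem_compl.mpr hxS, hxK⟩)
    · intro h
      rw [Finset.eq_empty_iff_forall_notMem]
      intro x hx
      exact Finset.mem_compl.mp (Finset.mem_inter.mp hx).1 (h (Finset.mem_inter.mp hx).2)
  by_cases h : K ⊆ S
  · rw [if_pos (hc.mpr h), if_pos h, Finset.inter_eq_right.mpr h, Finset.card_compl]
    simp
  · rw [if_neg (fun he => h (hc.mp he)), if_neg h, mul_zero]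

/-- The Möbius transform is recovered from the Fourier transform by
`m^ξ(S) = (-2)^{|S|} ∑_{T ⊇ S} ξ̂(T)`. -/
theorem mobius_eq_fourier (n : ℕ) (ξ : Finset (Fin n) → ℝ) (S : Finset (Fin n)) :
    mobius ξ S =
      (-2 : ℝ) ^ S.card * ∑ T ∈ Finset.univ.filter (fun T => S ⊆ T), fourierT ξ T := by
  unfold mobius fourierT
  have swap : ∑ T ∈ Finset.univ.filter (fun T => S ⊆ T),
        (1 / 2 ^ n : ℝ) * ∑ K : Finset (Fin n), (-1 : ℝ) ^ (T ∩ K).card * ξ K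
      = (1 / 2 ^ n : ℝ) * ∑ K ∈ S.powerset, ((-1:ℝ)^K.card * 2^(n - S.card)) * ξ K := by
    rw [← Finset.mul_sum]
    congr 1
    rw [Finset.sum_comm]
    rw [← Finset.sum_filter_add_sum_filter_not Finset.univ (fun K => K ⊆ S)]
    have h1 : ∀ K ∈ Finset.univ.filter (fun K => K ⊆ S),
        (∑ T ∈ Finset.univ.filter (fun T => S ⊆ T), (-1:ℝ)^(T ∩ K).card * ξ K)
        = ((-1:ℝ)^K.card * 2^(n - S.card)) * ξ K := by
      intro K hK
      rw [← Finset.sum_mul, aux_key, if_pos (Finset.mem_filter.mp hK).2]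
    have h2 : ∀ K ∈ Finset.univ.filter (fun K => ¬ K ⊆ S),
        (∑ T ∈ Finset.univ.filter (fun T => S ⊆ T), (-1:ℝ)^(T ∩ K).card * ξ K) = 0 := by
      intro K hK
      rw [← Finset.sum_mul, aux_key, if_neg (Finset.mem_filter.mp hK).2, zero_mul]
    rw [Finset.sum_congr rfl h1, Finset.sum_congr rfl h2, Finset.sum_const_zero, add_zero]
    congr 1
    ext K; simp [Finset.mem_powerset]
  rw [swap]; simp only [Finset.mul_sum]
  refine Finset.sum_congr rfl fun K hK => ?_
  have hKS : K ⊆ S := Finset.mem_powerset.mp hK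
  have hcard : (S \ K).card = S.card - K.card := Finset.card_sdiff_of_subset hKS
  have hKle : K.card ≤ S.card := Finset.card_le_card hKS
  have hSle : S.card ≤ n := by simpa using Finset.card_le_card (Finset.subset_univ S)
  rw [hcard]
  have key : (-1:ℝ)^(S.card - K.card)
      = (-2:ℝ)^S.card * ((1/2^n) * ((-1:ℝ)^K.card * 2^(n - S.card))) := by
    have h2 : (2:ℝ)^S.card * 2^(n - S.card) = 2^n := by
      rw [← pow_add, Nat.add_sub_cancel' hSle]
    have hm1 : (-1:ℝ)^(S.card - K.card) * (-1:ℝ)^K.card = (-1:ℝ)^S.card := by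
      rw [← pow_add, Nat.sub_add_cancel hKle]
    have hK2 : ((-1:ℝ)^K.card) * ((-1:ℝ)^K.card) = 1 := by
      rw [← pow_add, ← two_mul, pow_mul]; norm_num
    have hneg2 : (-2:ℝ)^S.card = (-1:ℝ)^S.card * 2^S.card := by
      rw [← mul_pow]; norm_num
    have h2n : (2:ℝ)^n ≠ 0 := by positivity
    field_simp
    calc (-1:ℝ)^(S.card - K.card) * 2^n
        = ((-1:ℝ)^(S.card - K.card) * (-1:ℝ)^K.card) * (-1:ℝ)^K.card * 2^n := by
          rw [mul_assoc ((-1:ℝ)^(S.card - K.card)), hK2, mul_one]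
      _ = (-1:ℝ)^S.card * (-1:ℝ)^K.card * (2^S.card * 2^(n - S.card)) := by rw [hm1, h2]
      _ = (-2:ℝ)^S.card * ((-1:ℝ)^K.card * 2^(n-S.card)) := by rw [hneg2]; ring
      _ = (-2:ℝ)^S.card * (-1:ℝ)^K.card * 2^(n-S.card) := by ring
  rw [key]; ring
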